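/- Uhlmann's theorem (isometry form): for a positive semidefinite ρ_A with purification ρ_{AB} and σ_A with purification σ_{AC}, the fidelity satisfies F(ρ_A, σ_A) = max over partial isometries V : B → C of F((1⊗V) ρ_{AB} (1⊗V)†, σ_{AC}). -/

import Mathlib

open Matrix
open scoped ComplexOrder Classical

/-- The square root of a positive semidefinite matrix (removed from Mathlib; old definition). -/
noncomputable def Matrix.PosSemidef.sqrt {n 𝕜 : Type*} [Fintype n] [RCLike 𝕜] [DecidableEq n]
    {A : Matrix n n 𝕜} (hA : A.PosSemidef) : Matrix n n 𝕜 :=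
  hA.1.eigenvectorUnitary.1 * diagonal ((↑) ∘ (√·) ∘ hA.1.eigenvalues) *
    (star hA.1.eigenvectorUnitary : Matrix n n 𝕜)

/-- The trace norm `‖X‖₁ = Tr √(XᴴX)` of a complex matrix. -/
noncomputable def traceNorm {n : Type*} [Fintype n] [DecidableEq n] (X : Matrix n n ℂ) : ℝ :=
  ((Matrix.posSemidef_conjTranspose_mul_self X).sqrt.trace).re

/-- The positive semidefinite square root, extended by `0` off the PSD cone. -/
noncomputable def msqrt {n : Type*} [Fintype n] [DecidableEq n] (X : Matrix n n ℂ) : Matrix n n ℂ :=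
  if h : X.PosSemidef then h.sqrt else 0

/-- The fidelity `F(ρ,σ) = ‖√ρ √σ‖₁²`. -/
noncomputable def fidelity {n : Type*} [Fintype n] [DecidableEq n] (ρ σ : Matrix n n ℂ) : ℝ :=
  (traceNorm (msqrt ρ * msqrt σ)) ^ 2

open scoped Kronecker

/-- A rank-one positive semidefinite (pure) operator. -/
def IsPure {n : Type*} (M : Matrix n n ℂ) : Prop :=
  ∃ v : n → ℂ, M = Matrix.vecMulVec v (star v)

/-- Partial trace over the second tensor factor. -/
noncomputable def ptraceR {A B : Type*} [Fintype B] (M : Matrix (A × B) (A × B) ℂ) :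
    Matrix A A ℂ :=
  fun a a' => ∑ b, M (a, b) (a', b)

/-- A partial isometry, as a matrix. -/
def IsPartialIsometry {m n : Type*} [Fintype m] [Fintype n] (V : Matrix m n ℂ) : Prop :=
  V * Vᴴ * V = V

section SqrtCompat
open scoped MatrixOrder

lemma Matrix.PosSemidef.sqrt_eq_cfcSqrt {n : Type*} [Fintype n] [DecidableEq n]
    {A : Matrix n n ℂ} (hA : A.PosSemidef) : hA.sqrt = CFC.sqrt A := by
  rw [CFC.sqrt_eq_cfc, cfc_nnreal_eq_real _ A, hA.1.cfc_eq]
  simp only [IsHermitian.cfc, Matrix.PosSemidef.sqrt, Unitary.conjStarAlgAut_apply]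
  congr 3
  funext i
  simp [Real.coe_sqrt, Real.coe_toNNReal', max_eq_left (hA.eigenvalues_nonneg i)]

lemma Matrix.PosSemidef.posSemidef_sqrt {n : Type*} [Fintype n] [DecidableEq n]
    {A : Matrix n n ℂ} (hA : A.PosSemidef) : hA.sqrt.PosSemidef := by
  rw [hA.sqrt_eq_cfcSqrt]; exact (CFC.sqrt_nonneg A).posSemidef

lemma Matrix.PosSemidef.sqrt_mul_self {n : Type*} [Fintype n] [DecidableEq n]
    {A : Matrix n n ℂ} (hA : A.PosSemidef) : hA.sqrt * hA.sqrt = A := by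
  rw [hA.sqrt_eq_cfcSqrt]; exact CFC.sqrt_mul_sqrt_self A hA.nonneg

lemma Matrix.PosSemidef.eq_sqrt_of_sq_eq {n : Type*} [Fintype n] [DecidableEq n]
    {A B : Matrix n n ℂ} (hB : B.PosSemidef) (hA : A.PosSemidef) (h : B ^ 2 = A) :
    B = hA.sqrt := by
  rw [hA.sqrt_eq_cfcSqrt]
  exact (CFC.sqrt_unique (by rw [← sq]; exact h) hB.nonneg).symm
end SqrtCompat

namespace UhlmannProof

set_option linter.unusedSectionVars false
set_option maxHeartbeats 2000000

noncomputable def tnorm {m n : Type*} [Fintype m] [Fintype n] [DecidableEq n]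
    (X : Matrix m n ℂ) : ℝ :=
  ((Matrix.posSemidef_conjTranspose_mul_self X).sqrt.trace).re

section A
variable {n : Type*} [Fintype n] [DecidableEq n] {m : Type*} [Fintype m] [DecidableEq m]
open Complex Polynomial

lemma aeval_conj (U D V : Matrix n n ℂ) (hUV : U * V = 1) (hVU : V * U = 1) (p : ℂ[X]) :
    Polynomial.aeval (U * D * V) p = U * Polynomial.aeval D p * V := by
  have hpow : ∀ k : ℕ, (U * D * V) ^ k = U * D ^ k * V := by
    intro k; induction k with
    | zero => simp [hUV]
    | succ k ih =>
        rw [pow_succ, ih, pow_succ]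
        calc U * D ^ k * V * (U * D * V) = U * D ^ k * (V * U) * (D * V) := by
              simp only [Matrix.mul_assoc]
          _ = U * (D ^ k * D) * V := by rw [hVU, Matrix.mul_one]; simp only [Matrix.mul_assoc]
  induction p using Polynomial.induction_on' with
  | add f g hf hg => simp [hf, hg, Matrix.mul_add, Matrix.add_mul]
  | monomial k c =>
      simp only [aeval_monomial, hpow, Algebra.algebraMap_eq_smul_one]
      rw [smul_mul_assoc, smul_mul_assoc, one_mul, mul_smul_comm, smul_mul_assoc, one_mul]

lemma aeval_diagonal (d : n → ℂ) (p : ℂ[X]) :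
    Polynomial.aeval (diagonal d) p = diagonal (fun i => Polynomial.aeval (d i) p) := by
  induction p using Polynomial.induction_on' with
  | add f g hf hg => simp [hf, hg, diagonal_add]
  | monomial k c =>
      simp only [aeval_monomial, diagonal_pow, Algebra.algebraMap_eq_smul_one,
        smul_mul_assoc, one_mul, smul_eq_mul, mul_one]
      rw [← diagonal_smul]
      congr 1

lemma sqrt_eq_aeval {P : Matrix n n ℂ} (hP : P.PosSemidef) (p : ℝ[X])
    (hp : ∀ i, p.eval (hP.1.eigenvalues i) = Real.sqrt (hP.1.eigenvalues i)) :
    Polynomial.aeval P (p.map (algebraMap ℝ ℂ)) = hP.sqrt := by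
  have hUV : (hP.1.eigenvectorUnitary : Matrix n n ℂ) * star (hP.1.eigenvectorUnitary : Matrix n n ℂ) = 1 :=
    mem_unitaryGroup_iff.mp hP.1.eigenvectorUnitary.2
  have hVU : star (hP.1.eigenvectorUnitary : Matrix n n ℂ) * (hP.1.eigenvectorUnitary : Matrix n n ℂ) = 1 :=
    mem_unitaryGroup_iff'.mp hP.1.eigenvectorUnitary.2
  conv_lhs => rw [hP.1.spectral_theorem, Unitary.conjStarAlgAut_apply]
  rw [aeval_conj _ _ _ hUV hVU, aeval_diagonal]
  show _ = (hP.1.eigenvectorUnitary : Matrix n n ℂ) *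
      diagonal (fun i => (Real.sqrt (hP.1.eigenvalues i) : ℂ)) *
      star (hP.1.eigenvectorUnitary : Matrix n n ℂ)
  have hfun : (fun i => Polynomial.aeval ((RCLike.ofReal ∘ hP.1.eigenvalues) i)
      (p.map (algebraMap ℝ ℂ))) = fun i => (Real.sqrt (hP.1.eigenvalues i) : ℂ) := by
    funext i
    show Polynomial.aeval ((hP.1.eigenvalues i : ℝ) : ℂ) (p.map (algebraMap ℝ ℂ)) = _
    rw [Polynomial.aeval_map_algebraMap]
    rw [show ((hP.1.eigenvalues i : ℝ) : ℂ) = algebraMap ℝ ℂ (hP.1.eigenvalues i) from rfl]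
    rw [Polynomial.aeval_algebraMap_apply_eq_algebraMap_eval, hp i]
    rfl
  rw [hfun]

lemma trace_pow_comm (Y : Matrix m n ℂ) (k : ℕ) :
    ((Yᴴ * Y) ^ (k + 1)).trace = ((Y * Yᴴ) ^ (k + 1)).trace := by
  have key : ∀ j : ℕ, (Yᴴ * Y) ^ (j + 1) = Yᴴ * ((Y * Yᴴ) ^ j * Y) := by
    intro j; induction j with
    | zero => simp [Matrix.mul_assoc]
    | succ j ih =>
        rw [pow_succ, ih, pow_succ]
        simp only [Matrix.mul_assoc]
  rw [key k, Matrix.trace_mul_comm, pow_succ]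
  simp only [Matrix.mul_assoc]
end A

section TSC
variable {n : Type*} [Fintype n] [DecidableEq n] {m : Type*} [Fintype m] [DecidableEq m]
open Complex Polynomial

lemma trace_sqrt_comm (Y : Matrix m n ℂ) :
    (posSemidef_conjTranspose_mul_self Y).sqrt.trace
      = (posSemidef_self_mul_conjTranspose Y).sqrt.trace := by
  have hP := posSemidef_conjTranspose_mul_self Y
  have hQ := posSemidef_self_mul_conjTranspose Y
  set s : Finset ℝ := insert 0 ((Finset.univ.image hP.1.eigenvalues) ∪
      (Finset.univ.image hQ.1.eigenvalues)) with hs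
  set p : ℝ[X] := Lagrange.interpolate s id Real.sqrt with hpdef
  have hnode : ∀ x ∈ s, p.eval x = Real.sqrt x := by
    intro x hx
    have := Lagrange.eval_interpolate_at_node Real.sqrt (Set.injOn_id _) hx
    exact this
  have h0 : p.eval 0 = 0 := by
    rw [hnode 0 (by simp [hs])]; simp
  set q : ℂ[X] := p.map (algebraMap ℝ ℂ) with hq
  have hq0 : q.coeff 0 = 0 := by
    rw [hq, Polynomial.coeff_map, Polynomial.coeff_zero_eq_eval_zero, h0]; simp
  rw [← sqrt_eq_aeval hP p (fun i => hnode _ (by simp [hs])),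
      ← sqrt_eq_aeval hQ p (fun i => hnode _ (by simp [hs]))]
  rw [Polynomial.aeval_eq_sum_range (R := ℂ) (p := q), Polynomial.aeval_eq_sum_range (R := ℂ) (p := q)]
  rw [Matrix.trace_sum, Matrix.trace_sum]
  apply Finset.sum_congr rfl
  intro i _
  rw [Matrix.trace_smul, Matrix.trace_smul]
  rcases Nat.eq_zero_or_pos i with h | h
  · subst h; rw [hq0]; simp
  · obtain ⟨k, rfl⟩ := Nat.exists_eq_add_of_lt h
    simp only [zero_add]
    rw [trace_pow_comm Y k]
end TSC

section A
variable {n : Type*} [Fintype n] [DecidableEq n] {m : Type*} [Fintype m] [DecidableEq m]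
open Complex

lemma msqrt_eq {P : Matrix n n ℂ} (h : P.PosSemidef) : msqrt P = h.sqrt := dif_pos h

-- smul PSD
lemma posSemidef_ofReal_smul {c : ℝ} (hc : 0 ≤ c) {A : Matrix n n ℂ} (hA : A.PosSemidef) :
    ((c : ℂ) • A).PosSemidef := by
  constructor
  · show ((c:ℂ) • A)ᴴ = _
    rw [conjTranspose_smul, hA.1.eq]
    norm_num
  · intro x
    exact (hA.smul (Complex.zero_le_real.mpr hc)).2 x

lemma vecMulVec_mul_vecMulVec (a : n → ℂ) (b : n → ℂ) (c : n → ℂ) (d : n → ℂ) :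
    vecMulVec a b * vecMulVec c d = (b ⬝ᵥ c) • vecMulVec a d := by
  ext i j
  simp [mul_apply, vecMulVec_apply, dotProduct, Finset.sum_mul, Finset.mul_sum]
  apply Finset.sum_congr rfl
  intro k _
  ring

lemma vecMulVec_conjTranspose (a b : n → ℂ) :
    (vecMulVec a (star b))ᴴ = vecMulVec b (star a) := by
  ext i j
  simp [conjTranspose_apply, vecMulVec_apply, mul_comm]

lemma star_dot_self (w : n → ℂ) : star w ⬝ᵥ w = ((∑ i, ‖(w i)‖ ^ 2 : ℝ) : ℂ) := by
  push_cast
  simp only [dotProduct, Pi.star_apply]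
  apply Finset.sum_congr rfl
  intro k _
  rw [mul_comm, Complex.star_def, Complex.mul_conj, Complex.normSq_eq_norm_sq]
  push_cast; ring

lemma trace_vecMulVec (a b : n → ℂ) : (vecMulVec a b).trace = b ⬝ᵥ a := by
  simp [Matrix.trace, Matrix.diag, vecMulVec_apply, dotProduct, mul_comm]
end A

section B
set_option linter.unusedSectionVars false
variable {n : Type*} [Fintype n] [DecidableEq n]
open Complex

lemma sqrt_eq_of' {P Z : Matrix n n ℂ} (h : P.PosSemidef) (hZ : Z.PosSemidef)
    (hsq : Z * Z = P) : h.sqrt = Z :=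
  (hZ.eq_sqrt_of_sq_eq h (by rw [pow_two, hsq])).symm

lemma posSemidef_vecMulVec (w : n → ℂ) : (vecMulVec w (star w)).PosSemidef := by
  rw [vecMulVec_eq Unit, ← conjTranspose_replicateCol]
  exact posSemidef_self_mul_conjTranspose _

lemma msqrt_zero : msqrt (0 : Matrix n n ℂ) = 0 := by
  rw [msqrt_eq Matrix.PosSemidef.zero, sqrt_eq_of' _ Matrix.PosSemidef.zero (by simp)]

lemma traceNorm_zero' : traceNorm (0 : Matrix n n ℂ) = 0 := by
  have h0 : (posSemidef_conjTranspose_mul_self (0 : Matrix n n ℂ)).sqrt = 0 :=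
    sqrt_eq_of' _ Matrix.PosSemidef.zero (by simp)
  unfold traceNorm
  rw [h0]; simp

lemma inv_sqrt_mul_self {t : ℝ} (h0 : 0 ≤ t) (h : t ≠ 0) :
    (Real.sqrt t)⁻¹ * (Real.sqrt t)⁻¹ * t = 1 := by
  have h1 : Real.sqrt t * Real.sqrt t = t := Real.mul_self_sqrt h0
  have hs : Real.sqrt t ≠ 0 := by positivity
  field_simp
  try nlinarith [h1]

lemma traceNorm_smul_vecMulVec (z : ℂ) (w u : n → ℂ)
    (htu : (∑ i, ‖(u i)‖ ^ 2) ≠ 0) :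
    traceNorm (z • vecMulVec w (star u)) =
      ‖z‖ * Real.sqrt (∑ i, ‖(w i)‖ ^ 2) *
        Real.sqrt (∑ i, ‖(u i)‖ ^ 2) := by
  set tw : ℝ := ∑ i, ‖(w i)‖ ^ 2 with htwd
  set tu : ℝ := ∑ i, ‖(u i)‖ ^ 2 with htud
  have htw0 : 0 ≤ tw := Finset.sum_nonneg fun i _ => by positivity
  have htu0 : 0 ≤ tu := Finset.sum_nonneg fun i _ => by positivity
  have htu0' : 0 < tu := lt_of_le_of_ne htu0 (Ne.symm htu)
  have hsqtu : Real.sqrt tu ≠ 0 := by positivity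
  have key : (z • vecMulVec w (star u))ᴴ * (z • vecMulVec w (star u))
      = (((‖z‖ ^ 2 * tw : ℝ) : ℂ)) • vecMulVec u (star u) := by
    rw [conjTranspose_smul, vecMulVec_conjTranspose, Matrix.smul_mul, Matrix.mul_smul,
      smul_smul, vecMulVec_mul_vecMulVec, star_dot_self, smul_smul, ← htwd]
    congr 1
    rw [Complex.star_def, mul_comm (starRingEnd ℂ z) z, Complex.mul_conj, Complex.normSq_eq_norm_sq]
    push_cast
    try ring
  have hsqrt : (posSemidef_conjTranspose_mul_self (z • vecMulVec w (star u))).sqrt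
      = (((‖z‖ * Real.sqrt tw * (Real.sqrt tu)⁻¹ : ℝ) : ℂ)) • vecMulVec u (star u) := by
    apply sqrt_eq_of'
    · exact posSemidef_ofReal_smul (by positivity) (posSemidef_vecMulVec u)
    · rw [Matrix.smul_mul, Matrix.mul_smul, smul_smul, vecMulVec_mul_vecMulVec, star_dot_self,
        smul_smul, ← htud, key]
      congr 1
      norm_cast
      have h1 : Real.sqrt tw * Real.sqrt tw = tw := Real.mul_self_sqrt htw0
      have h2 : Real.sqrt tu * Real.sqrt tu = tu := Real.mul_self_sqrt htu0
      field_simp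
      rw [Real.sq_sqrt htw0, Real.sq_sqrt htu0]; ring
  unfold traceNorm
  rw [hsqrt, Matrix.trace_smul, trace_vecMulVec, star_dot_self, ← htud]
  rw [smul_eq_mul, ← Complex.ofReal_mul]
  rw [Complex.ofReal_re]
  have h2 : Real.sqrt tu * Real.sqrt tu = tu := Real.mul_self_sqrt htu0
  have h3 : (Real.sqrt tu)⁻¹ * tu = Real.sqrt tu := by
    rw [inv_mul_eq_iff_eq_mul₀ hsqtu, h2]
  calc ‖z‖ * Real.sqrt tw * (Real.sqrt tu)⁻¹ * tu
      = ‖z‖ * Real.sqrt tw * ((Real.sqrt tu)⁻¹ * tu) := by ring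
    _ = _ := by rw [h3]

lemma fidelity_pure (w u : n → ℂ) :
    fidelity (vecMulVec w (star w)) (vecMulVec u (star u)) = ‖(star w ⬝ᵥ u)‖ ^ 2 := by
  classical
  set tw : ℝ := ∑ i, ‖(w i)‖ ^ 2 with htwd
  set tu : ℝ := ∑ i, ‖(u i)‖ ^ 2 with htud
  have htw0 : 0 ≤ tw := Finset.sum_nonneg fun i _ => by positivity
  have htu0 : 0 ≤ tu := Finset.sum_nonneg fun i _ => by positivity
  by_cases hw : tw = 0
  · have hw0 : w = 0 := by
      funext i
      have h1 : ‖(w i)‖ ^ 2 ≤ 0 := hw ▸ Finset.single_le_sum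
        (f := fun i => ‖(w i)‖ ^ 2) (fun i _ => by positivity) (Finset.mem_univ i)
      have : ‖(w i)‖ = 0 := by nlinarith [norm_nonneg (w i)]
      simpa using this
    subst hw0
    rw [show vecMulVec (0 : n → ℂ) (star (0 : n → ℂ)) = 0 by ext i j; simp [vecMulVec_apply]]
    rw [fidelity, msqrt_zero, Matrix.zero_mul, traceNorm_zero']
    simp
  by_cases hu : tu = 0
  · have hu0 : u = 0 := by
      funext i
      have h1 : ‖(u i)‖ ^ 2 ≤ 0 := hu ▸ Finset.single_le_sum
        (f := fun i => ‖(u i)‖ ^ 2) (fun i _ => by positivity) (Finset.mem_univ i)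
      have : ‖(u i)‖ = 0 := by nlinarith [norm_nonneg (u i)]
      simpa using this
    subst hu0
    rw [show vecMulVec (0 : n → ℂ) (star (0 : n → ℂ)) = 0 by ext i j; simp [vecMulVec_apply]]
    rw [fidelity, msqrt_zero, Matrix.mul_zero, traceNorm_zero']
    simp
  -- main case
  have hρ := posSemidef_vecMulVec w
  have hσ := posSemidef_vecMulVec u
  have hsw : Real.sqrt tw ≠ 0 := by positivity
  have hsu : Real.sqrt tu ≠ 0 := by positivity
  have hmsρ : msqrt (vecMulVec w (star w)) = (((Real.sqrt tw)⁻¹ : ℝ) : ℂ) • vecMulVec w (star w) := by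
    rw [msqrt_eq hρ]
    apply sqrt_eq_of' hρ (posSemidef_ofReal_smul (by positivity) hρ)
    rw [Matrix.smul_mul, Matrix.mul_smul, smul_smul, vecMulVec_mul_vecMulVec, star_dot_self,
      smul_smul]
    rw [← htwd]
    rw [show ((((Real.sqrt tw)⁻¹ : ℝ) : ℂ) * (((Real.sqrt tw)⁻¹ : ℝ) : ℂ) * ((tw : ℝ) : ℂ)) = 1 by
      norm_cast
      exact inv_sqrt_mul_self htw0 hw]
    rw [one_smul]
  have hmsσ : msqrt (vecMulVec u (star u)) = (((Real.sqrt tu)⁻¹ : ℝ) : ℂ) • vecMulVec u (star u) := by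
    rw [msqrt_eq hσ]
    apply sqrt_eq_of' hσ (posSemidef_ofReal_smul (by positivity) hσ)
    rw [Matrix.smul_mul, Matrix.mul_smul, smul_smul, vecMulVec_mul_vecMulVec, star_dot_self,
      smul_smul]
    rw [← htud]
    rw [show ((((Real.sqrt tu)⁻¹ : ℝ) : ℂ) * (((Real.sqrt tu)⁻¹ : ℝ) : ℂ) * ((tu : ℝ) : ℂ)) = 1 by
      norm_cast
      exact inv_sqrt_mul_self htu0 hu]
    rw [one_smul]
  rw [fidelity, hmsρ, hmsσ, Matrix.smul_mul, Matrix.mul_smul, smul_smul,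
    vecMulVec_mul_vecMulVec, smul_smul]
  rw [traceNorm_smul_vecMulVec _ _ _ hu]
  rw [norm_mul, norm_mul, Complex.norm_real, Real.norm_eq_abs, Complex.norm_real, Real.norm_eq_abs]
  have h1 : Real.sqrt tw * Real.sqrt tw = tw := Real.mul_self_sqrt htw0
  have h2 : Real.sqrt tu * Real.sqrt tu = tu := Real.mul_self_sqrt htu0
  rw [_root_.abs_of_nonneg (by positivity : (0:ℝ) ≤ (Real.sqrt tw)⁻¹),
      _root_.abs_of_nonneg (by positivity : (0:ℝ) ≤ (Real.sqrt tu)⁻¹)]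
  field_simp
  ring
end B

section S2
open Complex
variable {A B C : Type*} [Fintype A] [DecidableEq A] [Fintype B] [DecidableEq B]
  [Fintype C] [DecidableEq C]

lemma msqrt_eq' {n : Type*} [Fintype n] [DecidableEq n] {P : Matrix n n ℂ} (h : P.PosSemidef) :
    msqrt P = h.sqrt := dif_pos h

lemma sqrt_congr' {n : Type*} [Fintype n] [DecidableEq n] {P Q : Matrix n n ℂ} (hPQ : P = Q)
    (h1 : P.PosSemidef) (h2 : Q.PosSemidef) : h1.sqrt = h2.sqrt := by subst hPQ; rfl

lemma fidelity_factors (M : Matrix A B ℂ) (N : Matrix A C ℂ) :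
    fidelity (M * Mᴴ) (N * Nᴴ) = (tnorm (Mᴴ * N))^2 := by
  have hρ := posSemidef_self_mul_conjTranspose M
  have hσ := posSemidef_self_mul_conjTranspose N
  rw [fidelity, msqrt_eq' hρ, msqrt_eq' hσ]
  congr 1
  unfold traceNorm tnorm
  congr 1
  have hhρ : hρ.sqrt.conjTranspose = hρ.sqrt := hρ.posSemidef_sqrt.1
  have hhσ : hσ.sqrt.conjTranspose = hσ.sqrt := hσ.posSemidef_sqrt.1
  have E1 : (hρ.sqrt * hσ.sqrt) * (hρ.sqrt * hσ.sqrt)ᴴ = (hρ.sqrt * N) * (hρ.sqrt * N)ᴴ := by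
    rw [conjTranspose_mul, conjTranspose_mul, hhρ, hhσ]
    calc hρ.sqrt * hσ.sqrt * (hσ.sqrt * hρ.sqrt)
        = hρ.sqrt * (hσ.sqrt * hσ.sqrt) * hρ.sqrt := by simp only [Matrix.mul_assoc]
      _ = hρ.sqrt * (N * Nᴴ) * hρ.sqrt := by rw [hσ.sqrt_mul_self]
      _ = hρ.sqrt * N * (Nᴴ * hρ.sqrt) := by simp only [Matrix.mul_assoc]
  have E2 : (hρ.sqrt * N)ᴴ * (hρ.sqrt * N) = (Mᴴ * N)ᴴ * (Mᴴ * N) := by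
    rw [conjTranspose_mul, hhρ, conjTranspose_mul, conjTranspose_conjTranspose]
    calc Nᴴ * hρ.sqrt * (hρ.sqrt * N) = Nᴴ * (hρ.sqrt * hρ.sqrt) * N := by
          simp only [Matrix.mul_assoc]
      _ = Nᴴ * (M * Mᴴ) * N := by rw [hρ.sqrt_mul_self]
      _ = Nᴴ * M * (Mᴴ * N) := by simp only [Matrix.mul_assoc]
  calc (posSemidef_conjTranspose_mul_self (hρ.sqrt * hσ.sqrt)).sqrt.trace
      = (posSemidef_self_mul_conjTranspose (hρ.sqrt * hσ.sqrt)).sqrt.trace :=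
        trace_sqrt_comm _
    _ = (posSemidef_self_mul_conjTranspose (hρ.sqrt * N)).sqrt.trace := by
        rw [sqrt_congr' E1 _ _]
    _ = (posSemidef_conjTranspose_mul_self (hρ.sqrt * N)).sqrt.trace :=
        (trace_sqrt_comm _).symm
    _ = (posSemidef_conjTranspose_mul_self (Mᴴ * N)).sqrt.trace := by
        rw [sqrt_congr' E2 _ _]
end S2

section Core
open Complex
variable {B C : Type*} [Fintype B] [DecidableEq B] [Fintype C] [DecidableEq C]
variable {n : Type*} [Fintype n] [DecidableEq n]

lemma row_sq (Y : Matrix B C ℂ) (i : B) :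
    (Y * Yᴴ) i i = ((∑ j, ‖(Y i j)‖ ^ 2 : ℝ) : ℂ) := by
  push_cast
  simp only [mul_apply, conjTranspose_apply]
  apply Finset.sum_congr rfl
  intro j _
  rw [Complex.star_def, Complex.mul_conj, Complex.normSq_eq_norm_sq]
  push_cast; ring

lemma col_sq (Y : Matrix B C ℂ) (i : C) :
    (Yᴴ * Y) i i = ((∑ b, ‖(Y b i)‖ ^ 2 : ℝ) : ℂ) := by
  push_cast
  simp only [mul_apply, conjTranspose_apply]
  apply Finset.sum_congr rfl
  intro b _
  rw [mul_comm, Complex.star_def, Complex.mul_conj, Complex.normSq_eq_norm_sq]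
  push_cast; ring

lemma abs_sum_mul_le (a b : n → ℂ) :
    ‖(∑ j, a j * b j)‖ ≤
      Real.sqrt (∑ j, ‖(a j)‖ ^ 2) * Real.sqrt (∑ j, ‖(b j)‖ ^ 2) := by
  calc ‖(∑ j, a j * b j)‖ ≤ ∑ j, ‖(a j * b j)‖ :=
        norm_sum_le _ _
    _ = ∑ j, ‖(a j)‖ * ‖(b j)‖ := by simp [norm_mul]
    _ ≤ _ := by
        have h := Finset.sum_mul_sq_le_sq_mul_sq Finset.univ
          (fun j => ‖(a j)‖) (fun j => ‖(b j)‖)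
        have hnn : (0:ℝ) ≤ ∑ j, ‖(a j)‖ * ‖(b j)‖ :=
          Finset.sum_nonneg fun j _ => by positivity
        rw [← Real.sqrt_mul (Finset.sum_nonneg fun j _ => by positivity)]
        rw [show (∑ j, ‖(a j)‖ * ‖(b j)‖)
            = Real.sqrt ((∑ j, ‖(a j)‖ * ‖(b j)‖)^2) by
          rw [Real.sqrt_sq hnn]]
        exact Real.sqrt_le_sqrt h

lemma proj_diag (R : Matrix n n ℂ) (hherm : Rᴴ = R) (hidem : R * R = R) (i : n) :
    R i i = ((∑ j, ‖(R i j)‖ ^ 2 : ℝ) : ℂ) ∧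
      (∑ j, ‖(R i j)‖ ^ 2) ≤ 1 := by
  have h1 : R i i = ((∑ j, ‖(R i j)‖ ^ 2 : ℝ) : ℂ) := by
    have := row_sq R i
    rwa [hherm, hidem] at this
  refine ⟨h1, ?_⟩
  set t : ℝ := ∑ j, ‖(R i j)‖ ^ 2 with htd
  have ht0 : 0 ≤ t := Finset.sum_nonneg fun j _ => by positivity
  have h2 : ‖(R i i)‖ ^ 2 ≤ t := htd ▸ Finset.single_le_sum
    (f := fun j => ‖(R i j)‖ ^ 2) (fun j _ => by positivity) (Finset.mem_univ i)
  have h3 : ‖(R i i)‖ = t := by rw [h1, Complex.norm_real, Real.norm_eq_abs, _root_.abs_of_nonneg ht0]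
  nlinarith [h2, h3]

lemma core (X : Matrix B C ℂ) :
    (∃ K : Matrix C B ℂ, IsPartialIsometry K ∧ (X * K).trace = ((tnorm X : ℝ) : ℂ)) ∧
    (∀ K : Matrix C B ℂ, IsPartialIsometry K → ‖((X * K).trace)‖ ≤ tnorm X) := by
  classical
  have hP := posSemidef_conjTranspose_mul_self X
  set μ : C → ℝ := hP.1.eigenvalues with hμdef
  set U : Matrix C C ℂ := (hP.1.eigenvectorUnitary : Matrix C C ℂ) with hUdef
  have hUV : U * Uᴴ = 1 := by
    rw [← Matrix.star_eq_conjTranspose]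
    exact mem_unitaryGroup_iff.mp hP.1.eigenvectorUnitary.2
  have hVU : Uᴴ * U = 1 := by
    rw [← Matrix.star_eq_conjTranspose]
    exact mem_unitaryGroup_iff'.mp hP.1.eigenvectorUnitary.2
  have hμ0 : ∀ i, 0 ≤ μ i := fun i => hP.eigenvalues_nonneg i
  set D : Matrix C C ℂ := diagonal (fun i => ((μ i : ℝ) : ℂ)) with hDdef
  set Ds : Matrix C C ℂ := diagonal (fun i => ((Real.sqrt (μ i) : ℝ) : ℂ)) with hDsdef
  set g : C → ℝ := fun i => if μ i = 0 then 0 else (Real.sqrt (μ i))⁻¹ with hgdef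
  set e : C → ℝ := fun i => if μ i = 0 then 0 else 1 with hedef
  set S : Matrix C C ℂ := diagonal (fun i => ((g i : ℝ) : ℂ)) with hSdef
  set E : Matrix C C ℂ := diagonal (fun i => ((e i : ℝ) : ℂ)) with hEdef
  -- unitary cancellation helpers
  have hUc1 : ∀ Z : Matrix C C ℂ, Uᴴ * (U * Z) = Z := fun Z => by
    rw [← Matrix.mul_assoc, hVU, Matrix.one_mul]
  have hUc2 : ∀ Z : Matrix C C ℂ, U * (Uᴴ * Z) = Z := fun Z => by
    rw [← Matrix.mul_assoc, hUV, Matrix.one_mul]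
  -- spectral decomposition
  have hspec : Xᴴ * X = U * (D * Uᴴ) := by
    have h := hP.1.spectral_theorem
    rw [← Matrix.mul_assoc, ← Matrix.star_eq_conjTranspose]
    exact h
  have hspecr : ∀ Z : Matrix C C ℂ, Xᴴ * (X * Z) = U * (D * (Uᴴ * Z)) := fun Z => by
    rw [← Matrix.mul_assoc, hspec]
    simp only [Matrix.mul_assoc]
  -- sqrt of XᴴX
  have hsqrtP : (posSemidef_conjTranspose_mul_self X).sqrt = U * (Ds * Uᴴ) := by
    rw [← Matrix.mul_assoc, ← Matrix.star_eq_conjTranspose]; rfl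
  -- diagonal arithmetic
  have hdiagmul : ∀ (f h k : C → ℝ), (∀ i, f i * h i = k i) →
      diagonal (fun i => ((f i : ℝ) : ℂ)) * diagonal (fun i => ((h i : ℝ) : ℂ))
        = diagonal (fun i => ((k i : ℝ) : ℂ)) := by
    intro f h k hk
    rw [diagonal_mul_diagonal]
    apply congrArg
    funext i
    simp only [Pi.mul_apply, ← Complex.ofReal_mul, hk i]
  have hgμ : ∀ i, g i * μ i = Real.sqrt (μ i) := by
    intro i
    by_cases h : μ i = 0
    · simp [hgdef, h]
    · have hms : Real.sqrt (μ i) * Real.sqrt (μ i) = μ i := Real.mul_self_sqrt (hμ0 i)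
      have hs : Real.sqrt (μ i) ≠ 0 := by
        have : 0 < μ i := lt_of_le_of_ne (hμ0 i) (Ne.symm h)
        positivity
      simp only [hgdef, h, ite_false]
      field_simp
      try nlinarith [hms]
  have hsg : ∀ i, Real.sqrt (μ i) * g i = e i := by
    intro i
    by_cases h : μ i = 0
    · simp [hgdef, hedef, h]
    · have hs : Real.sqrt (μ i) ≠ 0 := by
        have : 0 < μ i := lt_of_le_of_ne (hμ0 i) (Ne.symm h)
        positivity
      simp only [hgdef, hedef, h, ite_false]
      field_simp
  have hgs : ∀ i, g i * Real.sqrt (μ i) = e i := fun i => by rw [mul_comm]; exact hsg i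
  have hge : ∀ i, g i * e i = g i := by
    intro i
    by_cases h : μ i = 0 <;> simp [hgdef, hedef, h]
  have hSD : S * D = Ds := hdiagmul _ _ _ hgμ
  have hDsS : Ds * S = E := hdiagmul _ _ _ hsg
  have hSDs : S * Ds = E := hdiagmul _ _ _ hgs
  have hSE : S * E = S := hdiagmul _ _ _ hge
  -- right-nested versions
  have hSDr : ∀ Z : Matrix C C ℂ, S * (D * Z) = Ds * Z := fun Z => by
    rw [← Matrix.mul_assoc, hSD]
  have hDsSr : ∀ Z : Matrix C C ℂ, Ds * (S * Z) = E * Z := fun Z => by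
    rw [← Matrix.mul_assoc, hDsS]
  have hSDsr : ∀ Z : Matrix C C ℂ, S * (Ds * Z) = E * Z := fun Z => by
    rw [← Matrix.mul_assoc, hSDs]
  have hSEr : ∀ Z : Matrix C C ℂ, S * (E * Z) = S * Z := fun Z => by
    rw [← Matrix.mul_assoc, hSE]
  have hSherm : Sᴴ = S := by
    rw [hSdef, diagonal_conjTranspose]
    apply congrArg
    funext i
    simp [Complex.star_def, Complex.conj_ofReal]
  -- the W matrix
  set W : Matrix B C ℂ := X * (U * (S * Uᴴ)) with hWdef
  have hWH : Wᴴ = U * (S * (Uᴴ * Xᴴ)) := by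
    rw [hWdef]
    simp only [conjTranspose_mul, conjTranspose_conjTranspose, hSherm, Matrix.mul_assoc]
  have hWHX : Wᴴ * X = U * (Ds * Uᴴ) := by
    rw [hWH]
    simp only [Matrix.mul_assoc]
    rw [show Uᴴ * (Xᴴ * X) = Uᴴ * (U * (D * Uᴴ)) from by rw [hspec],
        hUc1 (D * Uᴴ), hSDr Uᴴ]
  have hWHW : Wᴴ * W = U * (E * Uᴴ) := by
    rw [hWH, hWdef]
    simp only [Matrix.mul_assoc]
    rw [show Xᴴ * (X * (U * (S * Uᴴ))) = U * (D * (Uᴴ * (U * (S * Uᴴ)))) from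
          hspecr (U * (S * Uᴴ)),
        hUc1 (S * Uᴴ), hUc1 (D * (S * Uᴴ)), hSDr (S * Uᴴ), hDsSr Uᴴ]
  have hWWW : W * (Wᴴ * W) = W := by
    rw [hWHW, hWdef]
    simp only [Matrix.mul_assoc]
    rw [hUc1 (E * Uᴴ), hSEr Uᴴ]
  -- column vanishing and factorization
  have hXUsq : (X * U)ᴴ * (X * U) = D := by
    rw [conjTranspose_mul]
    simp only [Matrix.mul_assoc]
    rw [show Xᴴ * (X * U) = U * (D * (Uᴴ * U)) from hspecr U, hVU, Matrix.mul_one, hUc1 D]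
  have hXUcol : ∀ i, μ i = 0 → ∀ b, (X * U) b i = 0 := by
    intro i hi b
    have h1 := col_sq (X * U) i
    rw [hXUsq] at h1
    have h2 : (∑ b, ‖((X * U) b i)‖ ^ 2 : ℝ) = μ i := by
      rw [hDdef, Matrix.diagonal_apply_eq] at h1
      exact (Complex.ofReal_inj.mp h1).symm
    have h3 : (∑ b, ‖((X * U) b i)‖ ^ 2 : ℝ) = 0 := by rw [h2, hi]
    have h4 : ‖((X * U) b i)‖ ^ 2 = 0 := by
      have := (Finset.sum_eq_zero_iff_of_nonneg
        (fun b _ => by positivity : ∀ b ∈ Finset.univ, (0:ℝ) ≤ ‖((X * U) b i)‖ ^ 2)).mp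
        h3 b (Finset.mem_univ b)
      exact this
    have h5 : ‖((X * U) b i)‖ = 0 := by nlinarith [norm_nonneg ((X * U) b i)]
    simpa using h5
  have hXUE : X * U * E = X * U := by
    ext b i
    rw [hEdef, Matrix.mul_diagonal]
    by_cases h : μ i = 0
    · rw [hXUcol i h b]
      simp [hedef, h]
    · simp [hedef, h]
  have hXfact : W * (U * (Ds * Uᴴ)) = X := by
    rw [hWdef]
    simp only [Matrix.mul_assoc]
    rw [hUc1 (Ds * Uᴴ), hSDsr Uᴴ]
    calc X * (U * (E * Uᴴ)) = X * U * E * Uᴴ := by simp only [Matrix.mul_assoc]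
      _ = X * U * Uᴴ := by rw [hXUE]
      _ = X := by rw [Matrix.mul_assoc, hUV, Matrix.mul_one]
  -- trace of sqrt
  have htn : tnorm X = ∑ i, Real.sqrt (μ i) := by
    unfold tnorm
    rw [hsqrtP, ← Matrix.mul_assoc, Matrix.trace_mul_cycle, hVU, Matrix.one_mul,
      hDsdef, Matrix.trace_diagonal]
    rw [Complex.re_sum]
    simp
  constructor
  · -- existence
    refine ⟨Wᴴ, ?_, ?_⟩
    · show Wᴴ * Wᴴᴴ * Wᴴ = Wᴴ
      rw [conjTranspose_conjTranspose]
      calc Wᴴ * W * Wᴴ = (W * (Wᴴ * W))ᴴ := by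
            simp only [conjTranspose_mul, conjTranspose_conjTranspose, Matrix.mul_assoc]
        _ = Wᴴ := by rw [hWWW]
    · rw [Matrix.trace_mul_comm, hWHX, ← Matrix.mul_assoc, Matrix.trace_mul_cycle, hVU,
        Matrix.one_mul, hDsdef, Matrix.trace_diagonal, htn]
      push_cast
      rfl
  · -- upper bound
    intro K hK
    have hKr : ∀ Z : Matrix B C ℂ, K * (Kᴴ * (K * Z)) = K * Z := fun Z => by
      calc K * (Kᴴ * (K * Z)) = K * Kᴴ * K * Z := by simp only [Matrix.mul_assoc]
        _ = K * Z := by rw [hK]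
    have htr : (X * K).trace = (((Uᴴ * K) * (W * U)) * Ds).trace := by
      rw [← hXfact]
      simp only [Matrix.mul_assoc]
      rw [show W * (U * (Ds * (Uᴴ * K))) = (W * (U * Ds)) * (Uᴴ * K) from by
        simp only [Matrix.mul_assoc]]
      rw [Matrix.trace_mul_comm]
      rw [show Uᴴ * K * (W * (U * Ds)) = Uᴴ * K * (W * U) * Ds from by
        simp only [Matrix.mul_assoc]]
      simp only [Matrix.mul_assoc]
    have htrsum : (X * K).trace = ∑ i, ((Uᴴ * K) * (W * U)) i i * ((Real.sqrt (μ i) : ℝ) : ℂ) := by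
      rw [htr, hDsdef]
      simp [Matrix.trace, Matrix.diag, Matrix.mul_diagonal]
    -- the projection R'
    have hR'eq : (Uᴴ * K) * (Uᴴ * K)ᴴ = Uᴴ * (K * (Kᴴ * U)) := by
      simp only [conjTranspose_mul, conjTranspose_conjTranspose, Matrix.mul_assoc]
    have hR'herm : (Uᴴ * (K * (Kᴴ * U)))ᴴ = Uᴴ * (K * (Kᴴ * U)) := by
      simp only [conjTranspose_mul, conjTranspose_conjTranspose, Matrix.mul_assoc]
    have hR'idem : (Uᴴ * (K * (Kᴴ * U))) * (Uᴴ * (K * (Kᴴ * U))) = Uᴴ * (K * (Kᴴ * U)) := by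
      simp only [Matrix.mul_assoc]
      rw [show Kᴴ * (U * (Uᴴ * (K * (Kᴴ * U)))) = Kᴴ * (K * (Kᴴ * U)) from by
        rw [hUc2 (K * (Kᴴ * U))]]
      rw [show K * (Kᴴ * (K * (Kᴴ * U))) = K * (Kᴴ * U) from hKr (Kᴴ * U)]
    -- second factor
    have hWUsq : (W * U)ᴴ * (W * U) = E := by
      rw [conjTranspose_mul]
      simp only [Matrix.mul_assoc]
      rw [show Wᴴ * (W * U) = U * (E * (Uᴴ * U)) from by
        rw [← Matrix.mul_assoc, hWHW]; simp only [Matrix.mul_assoc]]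
      rw [hVU, Matrix.mul_one, hUc1 E]
    have habsZ : ∀ i, ‖(((Uᴴ * K) * (W * U)) i i)‖ ≤ 1 := by
      intro i
      rw [Matrix.mul_apply]
      refine le_trans (abs_sum_mul_le _ _) ?_
      have hb1 : (∑ j, ‖((Uᴴ * K) i j)‖ ^ 2) ≤ 1 := by
        have hrs := row_sq (Uᴴ * K) i
        rw [hR'eq] at hrs
        have hp := proj_diag _ hR'herm hR'idem i
        have : (∑ j, ‖((Uᴴ * K) i j)‖ ^ 2)
            = ∑ j, ‖((Uᴴ * (K * (Kᴴ * U))) i j)‖ ^ 2 :=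
          Complex.ofReal_inj.mp (by rw [← hrs, ← hp.1])
        rw [this]
        exact hp.2
      have hb2 : (∑ j, ‖((W * U) j i)‖ ^ 2) ≤ 1 := by
        have hcs := col_sq (W * U) i
        rw [hWUsq, hEdef] at hcs
        have he1 : (∑ j, ‖((W * U) j i)‖ ^ 2) = e i := by
          rw [Matrix.diagonal_apply_eq] at hcs
          exact (Complex.ofReal_inj.mp hcs).symm
        rw [he1, hedef]
        by_cases h : μ i = 0 <;> simp [h]
      calc Real.sqrt (∑ j, ‖((Uᴴ * K) i j)‖ ^ 2) *
            Real.sqrt (∑ j, ‖((W * U) j i)‖ ^ 2)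
          ≤ 1 * 1 := by
            apply mul_le_mul
            · exact Real.sqrt_le_one.mpr hb1
            · exact Real.sqrt_le_one.mpr hb2
            · positivity
            · norm_num
        _ = 1 := by norm_num
    rw [htrsum, htn]
    calc ‖(∑ i, ((Uᴴ * K) * (W * U)) i i * ((Real.sqrt (μ i) : ℝ) : ℂ))‖
        ≤ ∑ i, ‖(((Uᴴ * K) * (W * U)) i i * ((Real.sqrt (μ i) : ℝ) : ℂ))‖ :=
          norm_sum_le _ _
      _ = ∑ i, ‖(((Uᴴ * K) * (W * U)) i i)‖ * Real.sqrt (μ i) := by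
          apply Finset.sum_congr rfl
          intro i _
          rw [norm_mul, Complex.norm_real, Real.norm_eq_abs,
            _root_.abs_of_nonneg (Real.sqrt_nonneg _)]
      _ ≤ ∑ i, Real.sqrt (μ i) := by
          apply Finset.sum_le_sum
          intro i _
          calc ‖(((Uᴴ * K) * (W * U)) i i)‖ * Real.sqrt (μ i)
              ≤ 1 * Real.sqrt (μ i) :=
                mul_le_mul_of_nonneg_right (habsZ i) (Real.sqrt_nonneg _)
            _ = Real.sqrt (μ i) := one_mul _
end Core

section Asm
open Complex
variable {A B C : Type*} [Fintype A] [DecidableEq A] [Fintype B] [DecidableEq B]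
  [Fintype C] [DecidableEq C]

lemma conj_vecMulVec {p q : Type*} [Fintype p] [Fintype q] (K : Matrix p q ℂ) (v : q → ℂ) :
    K * vecMulVec v (star v) * Kᴴ = vecMulVec (K *ᵥ v) (star (K *ᵥ v)) := by
  ext i j
  simp only [mul_apply, vecMulVec_apply, conjTranspose_apply, mulVec, dotProduct,
    Pi.star_apply, star_sum, star_mul']
  have hexp : ∀ (f g : q → ℂ), (∑ a, f a) * (∑ b, g b) = ∑ x, ∑ y, f y * g x := by
    intro f g
    rw [Finset.sum_mul_sum, Finset.sum_comm]
  rw [hexp]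
  apply Finset.sum_congr rfl
  intro x _
  rw [Finset.sum_mul]
  apply Finset.sum_congr rfl
  intro y _
  ring

lemma ptraceR_pure (v : A × B → ℂ) :
    ptraceR (vecMulVec v (star v)) =
      (Matrix.of fun a b => v (a, b)) * (Matrix.of fun a b => v (a, b))ᴴ := by
  ext a a'
  simp [ptraceR, mul_apply, vecMulVec_apply, conjTranspose_apply]

lemma mulVec_kron_one (V : Matrix C B ℂ) (v : A × B → ℂ) (a : A) (c : C) :
    (((1 : Matrix A A ℂ) ⊗ₖ V) *ᵥ v) (a, c) = ∑ b, V c b * v (a, b) := by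
  simp only [mulVec, dotProduct, kroneckerMap_apply, Fintype.sum_prod_type, one_apply]
  rw [Finset.sum_eq_single a]
  · simp
  · intro a' _ ha'
    simp [Ne.symm ha']
  · simp

lemma dot_eq_trace (V : Matrix C B ℂ) (v : A × B → ℂ) (u : A × C → ℂ) :
    star (((1 : Matrix A A ℂ) ⊗ₖ V) *ᵥ v) ⬝ᵥ u =
      (((Matrix.of fun a b => v (a, b))ᴴ * (Matrix.of fun a c => u (a, c))) * Vᴴᵀ).trace := by
  have sum3 : ∀ (F : A → B → C → ℂ),
      (∑ a, ∑ c, ∑ b, F a b c) = ∑ b, ∑ c, ∑ a, F a b c := by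
    intro F
    rw [Finset.sum_comm]
    rw [show (∑ c : C, ∑ a : A, ∑ b : B, F a b c) = ∑ c : C, ∑ b : B, ∑ a : A, F a b c from
      Finset.sum_congr rfl fun c _ => Finset.sum_comm]
    rw [Finset.sum_comm]
  have hL : star (((1 : Matrix A A ℂ) ⊗ₖ V) *ᵥ v) ⬝ᵥ u
      = ∑ a : A, ∑ c : C, ∑ b : B, star (V c b) * star (v (a, b)) * u (a, c) := by
    rw [dotProduct, Fintype.sum_prod_type]
    apply Finset.sum_congr rfl; intro a _
    apply Finset.sum_congr rfl; intro c _
    rw [Pi.star_apply, mulVec_kron_one, star_sum, Finset.sum_mul]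
    apply Finset.sum_congr rfl; intro b _
    rw [star_mul']
    try ring
  have hR : (((Matrix.of fun a b => v (a, b))ᴴ * (Matrix.of fun a c => u (a, c))) * Vᴴᵀ).trace
      = ∑ b : B, ∑ c : C, ∑ a : A, star (V c b) * star (v (a, b)) * u (a, c) := by
    rw [Matrix.trace]
    apply Finset.sum_congr rfl; intro b _
    rw [Matrix.diag, mul_apply]
    apply Finset.sum_congr rfl; intro c _
    rw [mul_apply, Finset.sum_mul]
    apply Finset.sum_congr rfl; intro a _
    simp only [conjTranspose_apply, transpose_apply, Matrix.of_apply]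
    ring
  rw [hL, hR, sum3]

lemma isPartialIsometry_conjTranspose {K : Matrix C B ℂ} (h : IsPartialIsometry K) :
    IsPartialIsometry Kᴴ := by
  unfold IsPartialIsometry at *
  rw [conjTranspose_conjTranspose]
  calc Kᴴ * K * Kᴴ = (K * Kᴴ * K)ᴴ := by simp only [conjTranspose_mul,
        conjTranspose_conjTranspose, Matrix.mul_assoc]
    _ = Kᴴ := by rw [h]

lemma isPartialIsometry_transpose {K : Matrix C B ℂ} (h : IsPartialIsometry K) :
    IsPartialIsometry Kᵀ := by
  unfold IsPartialIsometry at *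
  have h1 : Kᵀᴴ = Kᴴᵀ := by
    ext i j
    simp [conjTranspose_apply, transpose_apply]
  rw [h1, ← transpose_mul, ← transpose_mul]
  rw [show K * (Kᴴ * K) = K from by rw [← Matrix.mul_assoc, h]]
end Asm

end UhlmannProof

open UhlmannProof

/-- Uhlmann's theorem (isometry form): the fidelity of the marginals of the purifications
`ρ_{AB}` and `σ_{AC}` equals the maximum of `F((1⊗V) ρ_{AB} (1⊗V)†, σ_{AC})` over partial
isometries `V : B → C`. -/
theorem uhlmann_isometry_form {A B C : Type*} [Fintype A] [Fintype B] [Fintype C]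
    [DecidableEq A] [DecidableEq B] [DecidableEq C]
    (hBC : Fintype.card B ≤ Fintype.card C)
    (ρAB : Matrix (A × B) (A × B) ℂ) (σAC : Matrix (A × C) (A × C) ℂ)
    (hρpure : IsPure ρAB) (hσpure : IsPure σAC) :
    IsGreatest
      {x : ℝ | ∃ V : Matrix C B ℂ, IsPartialIsometry V ∧
        x = fidelity (((1 : Matrix A A ℂ) ⊗ₖ V) * ρAB * ((1 : Matrix A A ℂ) ⊗ₖ V)ᴴ) σAC}
      (fidelity (ptraceR ρAB) (ptraceR σAC)) := by
  classical
  obtain ⟨v, hv⟩ := hρpure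
  obtain ⟨u, hu⟩ := hσpure
  subst hv
  subst hu
  set M : Matrix A B ℂ := Matrix.of fun a b => v (a, b) with hM
  set N : Matrix A C ℂ := Matrix.of fun a c => u (a, c) with hN
  have htarget : fidelity (ptraceR (vecMulVec v (star v))) (ptraceR (vecMulVec u (star u)))
      = (tnorm (Mᴴ * N)) ^ 2 := by
    rw [ptraceR_pure v, ptraceR_pure u, fidelity_factors]
  have hvalue : ∀ V : Matrix C B ℂ,
      fidelity (((1 : Matrix A A ℂ) ⊗ₖ V) * vecMulVec v (star v) * ((1 : Matrix A A ℂ) ⊗ₖ V)ᴴ)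
        (vecMulVec u (star u)) = ‖(((Mᴴ * N) * Vᴴᵀ).trace)‖ ^ 2 := by
    intro V
    rw [conj_vecMulVec, fidelity_pure, dot_eq_trace]
  constructor
  · obtain ⟨K, hKiso, hKtr⟩ := (core (Mᴴ * N)).1
    refine ⟨Kᵀᴴ, isPartialIsometry_conjTranspose (isPartialIsometry_transpose hKiso), ?_⟩
    rw [hvalue, htarget]
    have hKid : (Kᵀᴴ)ᴴᵀ = K := by ext i j; simp
    rw [hKid, hKtr, Complex.norm_real, Real.norm_eq_abs, _root_.sq_abs]
  · rintro x ⟨V, hViso, hx⟩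
    rw [hx, hvalue, htarget]
    have hb := (core (Mᴴ * N)).2 Vᴴᵀ
      (isPartialIsometry_transpose (isPartialIsometry_conjTranspose hViso))
    have habs : 0 ≤ ‖(((Mᴴ * N) * Vᴴᵀ).trace)‖ := norm_nonneg _
    exact pow_le_pow_left₀ habs hb 2
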